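/- For a ∈ ℂ with a ≠ 0, let ν_a := (1/2) Σ_{k=0}^∞ 2^{−k} δ_{a^{−k}}, a Borel probability measure on ℂ (δ_x denotes the Dirac mass at x). Then ν_a({z}) ≤ 1/2 for every z ∈ ℂ if and only if a is not a root of unity (i.e. a^q ≠ 1 for every integer q ≥ 1). -/

import Mathlib

noncomputable section

open MeasureTheory
open scoped ENNReal

/-- The measure `ν_a = (1/2) ∑_{k≥0} 2^{-k} δ_{a^{-k}}` on `ℂ`, the measure of maximal
entropy of the degenerate quadratic boundary point `Λ_a`. -/
def nuMeasure (a : ℂ) : Measure ℂ :=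
  Measure.sum fun k : ℕ =>
    ((1 / 2 : ℝ≥0∞) * (1 / 2) ^ k) • Measure.dirac (a ^ (-(k : ℤ)))

lemma nuMeasure_apply (a : ℂ) (z : ℂ) :
    nuMeasure a {z}
      = ∑' k : ℕ, if a ^ (-(k : ℤ)) = z then (1 / 2 : ℝ≥0∞) * (1 / 2) ^ k else 0 := by
  rw [nuMeasure, Measure.sum_apply _ (measurableSet_singleton z)]
  refine tsum_congr fun k => ?_
  rw [Measure.smul_apply, Measure.dirac_apply' _ (measurableSet_singleton z)]
  simp only [Set.indicator_apply, Set.mem_singleton_iff, Pi.one_apply, smul_eq_mul, mul_ite,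
    mul_one, mul_zero]

/-- For `a ≠ 0`, every atom of `ν_a = (1/2) ∑_{k≥0} 2^{-k} δ_{a^{-k}}` has mass at most
`1/2` if and only if `a` is not a root of unity. -/
theorem nuMeasure_atoms_le_half_iff (a : ℂ) (ha : a ≠ 0) :
    (∀ z : ℂ, nuMeasure a {z} ≤ 1 / 2) ↔ ∀ q : ℕ, 1 ≤ q → a ^ q ≠ 1 := by
  constructor
  · intro h q hq haq
    have h1 := h 1
    rw [nuMeasure_apply] at h1
    set f : ℕ → ℝ≥0∞ := fun k =>
      if a ^ (-(k : ℤ)) = 1 then (1 / 2 : ℝ≥0∞) * (1 / 2) ^ k else 0 with hf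
    have hle : ∑ k ∈ ({0, q} : Finset ℕ), f k ≤ ∑' k, f k := ENNReal.sum_le_tsum _
    have hq0 : (0 : ℕ) ≠ q := fun h => by omega
    rw [Finset.sum_pair hq0] at hle
    have hf0 : f 0 = 1 / 2 := by simp [hf]
    have hfq : f q = (1 / 2 : ℝ≥0∞) * (1 / 2) ^ q := by
      have h2 : a ^ (-(q : ℤ)) = 1 := by
        rw [zpow_neg, zpow_natCast, haq, inv_one]
      show (if a ^ (-(q : ℤ)) = 1 then (1 / 2 : ℝ≥0∞) * (1 / 2) ^ q else 0) = _
      rw [if_pos h2]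
    rw [hf0, hfq] at hle
    have : (1 / 2 : ℝ≥0∞) + 1 / 2 * (1 / 2) ^ q ≤ 1 / 2 := le_trans hle h1
    have hpos : (0 : ℝ≥0∞) < 1 / 2 * (1 / 2) ^ q := by
      apply ENNReal.mul_pos <;> simp [pow_eq_zero_iff]
    have habs : (1 / 2 : ℝ≥0∞) < 1 / 2 + 1 / 2 * (1 / 2) ^ q :=
      ENNReal.lt_add_right (by simp) hpos.ne'
    exact absurd this (not_le.mpr habs)
  · intro h z
    rw [nuMeasure_apply]
    have hinj : ∀ j k : ℕ, a ^ (-(j : ℤ)) = a ^ (-(k : ℤ)) → j = k := by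
      intro j k hjk
      by_contra hne
      wlog hlt : j < k generalizing j k
      · exact this k j hjk.symm (Ne.symm hne) (by omega)
      have hpow : a ^ (j : ℤ) = a ^ (k : ℤ) := by
        have := congrArg Inv.inv hjk
        simpa [zpow_neg] using this
      have : a ^ (k - j) = 1 := by
        rw [← zpow_natCast, Nat.cast_sub hlt.le, zpow_sub₀ ha, ← hpow,
          div_self (zpow_ne_zero _ ha)]
      exact h (k - j) (by omega) this
    by_cases hz : ∃ k : ℕ, a ^ (-(k : ℤ)) = z
    · obtain ⟨k0, hk0⟩ := hz
      have : (∑' k : ℕ, if a ^ (-(k : ℤ)) = z then (1 / 2 : ℝ≥0∞) * (1 / 2) ^ k else 0)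
          = (1 / 2 : ℝ≥0∞) * (1 / 2) ^ k0 := by
        rw [tsum_eq_single k0]
        · exact if_pos hk0
        · intro k hk
          exact if_neg fun h' => hk (hinj k k0 (h'.trans hk0.symm))
      rw [this]
      calc (1 / 2 : ℝ≥0∞) * (1 / 2) ^ k0 ≤ 1 / 2 * 1 := by
            gcongr
            exact pow_le_one' (by simp [ENNReal.div_le_iff]) k0
        _ = 1 / 2 := mul_one _
    · push_neg at hz
      have h0 : ∀ k : ℕ,
          (if a ^ (-(k : ℤ)) = z then (1 / 2 : ℝ≥0∞) * (1 / 2) ^ k else 0) = 0 :=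
        fun k => if_neg (hz k)
      rw [tsum_congr h0, tsum_zero]
      exact zero_le
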